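/- Suppose V_1, ..., V_{T+1} are real random variables such that V_{T+1} has continuous CDF G, the empirical CDF G̃(v) = (T+1)^{-1}∑_{t=1}^{T+1} 1{V_t < v} converges uniformly in probability to G, G is Lipschitz, and estimators V̂_t satisfy (T+1)^{-1}∑_t φ(|V̂_t − V_t|) → 0 in probability for some strictly increasing continuous φ with φ(0)=0, and V̂_{T+1} = V_{T+1} + o_P(1). Then Ĝ(V̂_{T+1}) = G(V_{T+1}) + o_P(1), where Ĝ(v) = (T+1)^{-1}∑_t 1{V̂_t < v}. -/

import Mathlib

open MeasureTheory Filter Finset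

/-- Basic consistency lemma for conformal prediction (Lemma 1): under uniform
convergence in probability of the empirical CDF of the oracle scores to a Lipschitz
(hence continuous) CDF `G`, aggregate `φ`-consistency of the estimated scores, and
consistency of the score of the test point, the estimated empirical CDF evaluated at
the estimated test score converges in probability to `G(V_{T+1})`.
Here, for sample size index `T`, observations are `t ∈ {0, …, T}` with `t = T`
playing the role of the test point `T+1`. -/
theorem stmt4 {Ω : Type*} [MeasurableSpace Ω] (μ : Measure Ω) [IsProbabilityMeasure μ]
    (V Vhat : ℕ → ℕ → Ω → ℝ) (G : ℝ → ℝ) (φ : ℝ → ℝ) (W : ℝ)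
    -- G is the CDF of the oracle score of the test point
    (hG_cdf : ∀ T v, G v = (μ {ω | V T T ω ≤ v}).toReal)
    -- G is Lipschitz
    (hG_lip : ∀ v1 v2 : ℝ, |G v1 - G v2| ≤ W * |v1 - v2|)
    -- uniform convergence in probability of the empirical CDF of the oracle scores
    (h_emp : ∀ ε > (0:ℝ), Tendsto (fun (T : ℕ) => μ {ω | ∃ v : ℝ,
        ε ≤ |((T:ℝ) + 1)⁻¹ * ∑ t ∈ range (T + 1), (if V T t ω < v then (1:ℝ) else 0) - G v|})
      atTop (nhds 0))
    -- φ is strictly increasing and continuous with φ(0) = 0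
    (hφ0 : φ 0 = 0) (hφmono : StrictMonoOn φ (Set.Ici 0)) (hφcont : Continuous φ)
    -- aggregate consistency of the estimated scores
    (h_est : ∀ ε > (0:ℝ), Tendsto (fun (T : ℕ) => μ {ω |
        ε ≤ ((T:ℝ) + 1)⁻¹ * ∑ t ∈ range (T + 1), φ |Vhat T t ω - V T t ω|})
      atTop (nhds 0))
    -- consistency of the estimated test score
    (h_last : ∀ ε > (0:ℝ), Tendsto (fun (T : ℕ) => μ {ω | ε ≤ |Vhat T T ω - V T T ω|})
      atTop (nhds 0)) :
    ∀ ε > (0:ℝ), Tendsto (fun (T : ℕ) => μ {ω |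
        ε ≤ |((T:ℝ) + 1)⁻¹ * ∑ t ∈ range (T + 1),
              (if Vhat T t ω < Vhat T T ω then (1:ℝ) else 0)
            - G (V T T ω)|}) atTop (nhds 0) := by
  intro ε hε
  have hε4 : (0:ℝ) < ε / 4 := by linarith
  set W' : ℝ := max W 0 with hW'def
  have hW0 : (0:ℝ) ≤ W' := le_max_right _ _
  have hlip : ∀ v1 v2 : ℝ, |G v1 - G v2| ≤ W' * |v1 - v2| := fun v1 v2 =>
    (hG_lip v1 v2).trans (mul_le_mul_of_nonneg_right (le_max_left _ _) (abs_nonneg _))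
  set δ : ℝ := ε / (8 * (W' + 1)) with hδdef
  have hδpos : (0:ℝ) < δ := by
    apply div_pos hε; positivity
  have hWδ : W' * (2 * δ) ≤ ε / 4 := by
    have h1 : δ * (8 * (W' + 1)) = ε := by
      rw [hδdef]; field_simp
    nlinarith [hδpos, hW0]
  have hφδ : 0 < φ δ := by
    have := hφmono Set.self_mem_Ici (Set.mem_Ici.2 hδpos.le) hδpos
    rwa [hφ0] at this
  set α : ℝ := φ δ * (ε / 4) with hαdef
  have hα : 0 < α := mul_pos hφδ hε4
  -- the key set inclusion
  have hsub : ∀ T : ℕ,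
      {ω | ε ≤ |((T:ℝ) + 1)⁻¹ * ∑ t ∈ range (T + 1),
              (if Vhat T t ω < Vhat T T ω then (1:ℝ) else 0) - G (V T T ω)|} ⊆
      ({ω | ∃ v : ℝ, ε / 4 ≤ |((T:ℝ) + 1)⁻¹ * ∑ t ∈ range (T + 1),
              (if V T t ω < v then (1:ℝ) else 0) - G v|}
        ∪ {ω | α ≤ ((T:ℝ) + 1)⁻¹ * ∑ t ∈ range (T + 1), φ |Vhat T t ω - V T t ω|})
        ∪ {ω | δ ≤ |Vhat T T ω - V T T ω|} := by
    intro T ω hω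
    by_contra hn
    simp only [Set.mem_union, Set.mem_setOf_eq, not_or, not_exists, not_le] at hn
    obtain ⟨⟨hA, hB⟩, hC⟩ := hn
    simp only [Set.mem_setOf_eq] at hω
    set c : ℝ := ((T:ℝ) + 1)⁻¹ with hcdef
    have hc : (0:ℝ) < c := by positivity
    set vh : ℝ := Vhat T T ω with hvh
    set v0 : ℝ := V T T ω with hv0
    set S : ℝ := c * ∑ t ∈ range (T + 1), (if Vhat T t ω < vh then (1:ℝ) else 0) with hS
    set N : ℝ := c * ∑ t ∈ range (T + 1),
      (if δ ≤ |Vhat T t ω - V T t ω| then (1:ℝ) else 0) with hN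
    set Gt : ℝ → ℝ := fun v => c * ∑ t ∈ range (T + 1),
      (if V T t ω < v then (1:ℝ) else 0) with hGt
    -- N < ε/4
    have hNbound : N < ε / 4 := by
      have hterm : ∀ t ∈ range (T + 1),
          φ δ * (if δ ≤ |Vhat T t ω - V T t ω| then (1:ℝ) else 0)
            ≤ φ |Vhat T t ω - V T t ω| := by
        intro t _
        split_ifs with h
        · simpa using hφmono.monotoneOn (Set.mem_Ici.2 hδpos.le)
            (Set.mem_Ici.2 (abs_nonneg _)) h
        · have : (0:ℝ) ≤ φ |Vhat T t ω - V T t ω| := by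
            have := hφmono.monotoneOn Set.self_mem_Ici
              (Set.mem_Ici.2 (abs_nonneg (Vhat T t ω - V T t ω))) (abs_nonneg _)
            rwa [hφ0] at this
          linarith
      have hsumle : φ δ * N ≤ c * ∑ t ∈ range (T + 1), φ |Vhat T t ω - V T t ω| := by
        have h2 := Finset.sum_le_sum hterm
        rw [← Finset.mul_sum] at h2
        calc φ δ * N = c * (φ δ * ∑ t ∈ range (T + 1),
              (if δ ≤ |Vhat T t ω - V T t ω| then (1:ℝ) else 0)) := by rw [hN]; ring
          _ ≤ c * ∑ t ∈ range (T + 1), φ |Vhat T t ω - V T t ω| :=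
            mul_le_mul_of_nonneg_left h2 hc.le
      have : φ δ * N < φ δ * (ε / 4) := lt_of_le_of_lt hsumle (by rw [hαdef] at hB; exact hB)
      exact (mul_lt_mul_iff_right₀ hφδ).1 this
    -- upper bound: S ≤ Gt (vh + δ) + N
    have hup : S ≤ Gt (vh + δ) + N := by
      have hterm : ∀ t ∈ range (T + 1),
          (if Vhat T t ω < vh then (1:ℝ) else 0) ≤
            (if V T t ω < vh + δ then (1:ℝ) else 0)
              + (if δ ≤ |Vhat T t ω - V T t ω| then (1:ℝ) else 0) := by
        intro t _
        by_cases h1 : Vhat T t ω < vh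
        · rw [if_pos h1]
          by_cases h2 : δ ≤ |Vhat T t ω - V T t ω|
          · rw [if_pos h2]; split_ifs <;> norm_num
          · push_neg at h2
            have h3 := abs_lt.1 h2
            have : V T t ω < vh + δ := by linarith [h3.1, h3.2]
            rw [if_pos this]; split_ifs <;> norm_num
        · rw [if_neg h1]; split_ifs <;> norm_num
      have h2 := Finset.sum_le_sum hterm
      rw [Finset.sum_add_distrib] at h2
      calc S ≤ c * (∑ t ∈ range (T + 1), (if V T t ω < vh + δ then (1:ℝ) else 0)
            + ∑ t ∈ range (T + 1), (if δ ≤ |Vhat T t ω - V T t ω| then (1:ℝ) else 0)) :=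
          mul_le_mul_of_nonneg_left h2 hc.le
        _ = Gt (vh + δ) + N := by rw [hGt, hN]; ring
    -- lower bound: Gt (vh - δ) ≤ S + N
    have hlo : Gt (vh - δ) ≤ S + N := by
      have hterm : ∀ t ∈ range (T + 1),
          (if V T t ω < vh - δ then (1:ℝ) else 0) ≤
            (if Vhat T t ω < vh then (1:ℝ) else 0)
              + (if δ ≤ |Vhat T t ω - V T t ω| then (1:ℝ) else 0) := by
        intro t _
        by_cases h1 : V T t ω < vh - δ
        · rw [if_pos h1]
          by_cases h2 : δ ≤ |Vhat T t ω - V T t ω|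
          · rw [if_pos h2]; split_ifs <;> norm_num
          · push_neg at h2
            have h3 := abs_lt.1 h2
            have : Vhat T t ω < vh := by linarith [h3.1, h3.2]
            rw [if_pos this]; split_ifs <;> norm_num
        · rw [if_neg h1]; split_ifs <;> norm_num
      have h2 := Finset.sum_le_sum hterm
      rw [Finset.sum_add_distrib] at h2
      calc Gt (vh - δ) = c * ∑ t ∈ range (T + 1),
            (if V T t ω < vh - δ then (1:ℝ) else 0) := rfl
        _ ≤ c * (∑ t ∈ range (T + 1), (if Vhat T t ω < vh then (1:ℝ) else 0)
            + ∑ t ∈ range (T + 1), (if δ ≤ |Vhat T t ω - V T t ω| then (1:ℝ) else 0)) :=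
          mul_le_mul_of_nonneg_left h2 hc.le
        _ = S + N := by rw [hS, hN]; ring
    -- empirical CDF uniform bounds
    have hA1' : |Gt (vh + δ) - G (vh + δ)| < ε / 4 := hA (vh + δ)
    have hA2' : |Gt (vh - δ) - G (vh - δ)| < ε / 4 := hA (vh - δ)
    have hA1 := abs_lt.1 hA1'
    have hA2 := abs_lt.1 hA2'
    -- Lipschitz bounds
    have hvdist : |vh - v0| < δ := hC
    have hL1 : |G (vh + δ) - G v0| ≤ ε / 4 := by
      calc |G (vh + δ) - G v0| ≤ W' * |vh + δ - v0| := hlip _ _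
        _ ≤ W' * (2 * δ) := by
          apply mul_le_mul_of_nonneg_left _ hW0
          have : |vh + δ - v0| ≤ |vh - v0| + |δ| := by
            calc |vh + δ - v0| = |(vh - v0) + δ| := by congr 1; ring
              _ ≤ |vh - v0| + |δ| := abs_add_le _ _
          rw [abs_of_pos hδpos] at this
          linarith
        _ ≤ ε / 4 := hWδ
    have hL2 : |G (vh - δ) - G v0| ≤ ε / 4 := by
      calc |G (vh - δ) - G v0| ≤ W' * |vh - δ - v0| := hlip _ _
        _ ≤ W' * (2 * δ) := by
          apply mul_le_mul_of_nonneg_left _ hW0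
          have : |vh - δ - v0| ≤ |vh - v0| + |δ| := by
            calc |vh - δ - v0| = |(vh - v0) + (-δ)| := by congr 1; ring
              _ ≤ |vh - v0| + |(-δ)| := abs_add_le _ _
              _ = |vh - v0| + |δ| := by rw [abs_neg]
          rw [abs_of_pos hδpos] at this
          linarith
        _ ≤ ε / 4 := hWδ
    have hL1' := abs_le.1 hL1
    have hL2' := abs_le.1 hL2
    -- contradiction
    have hfinal : |S - G v0| < ε := by
      rw [abs_lt]
      constructor <;> linarith [hA1.1, hA1.2, hA2.1, hA2.2, hL1'.1, hL1'.2,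
        hL2'.1, hL2'.2, hup, hlo, hNbound]
    have : ε ≤ |S - G v0| := hω
    linarith [abs_lt.1 hfinal]
  -- convergence of the majorizing sum
  have hsum : Tendsto (fun T : ℕ =>
      μ {ω | ∃ v : ℝ, ε / 4 ≤ |((T:ℝ) + 1)⁻¹ * ∑ t ∈ range (T + 1),
              (if V T t ω < v then (1:ℝ) else 0) - G v|}
        + μ {ω | α ≤ ((T:ℝ) + 1)⁻¹ * ∑ t ∈ range (T + 1), φ |Vhat T t ω - V T t ω|}
        + μ {ω | δ ≤ |Vhat T T ω - V T T ω|}) atTop (nhds 0) := by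
    have h := ((h_emp (ε / 4) hε4).add (h_est α hα)).add (h_last δ hδpos)
    simpa using h
  refine tendsto_of_tendsto_of_tendsto_of_le_of_le tendsto_const_nhds hsum
    (fun T => zero_le) (fun T => ?_)
  calc μ _ ≤ μ (({ω | ∃ v : ℝ, ε / 4 ≤ |((T:ℝ) + 1)⁻¹ * ∑ t ∈ range (T + 1),
              (if V T t ω < v then (1:ℝ) else 0) - G v|}
        ∪ {ω | α ≤ ((T:ℝ) + 1)⁻¹ * ∑ t ∈ range (T + 1), φ |Vhat T t ω - V T t ω|})
        ∪ {ω | δ ≤ |Vhat T T ω - V T T ω|}) := measure_mono (hsub T)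
    _ ≤ μ ({ω | ∃ v : ℝ, ε / 4 ≤ |((T:ℝ) + 1)⁻¹ * ∑ t ∈ range (T + 1),
              (if V T t ω < v then (1:ℝ) else 0) - G v|}
        ∪ {ω | α ≤ ((T:ℝ) + 1)⁻¹ * ∑ t ∈ range (T + 1), φ |Vhat T t ω - V T t ω|})
        + μ {ω | δ ≤ |Vhat T T ω - V T T ω|} := measure_union_le _ _
    _ ≤ _ := add_le_add_left (measure_union_le _ _) _
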